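/- Hybrid Hamming bound for non-degenerate DS codes: if a non-degenerate DS code with quantum length n and quantum dimension k can correct every combined error (e,z) with wt(e) ≤ t_D and wt(z) ≤ t_S (all such errors having distinct syndromes in F_2^{n-k}), then Σ_{i=0}^{t_D} Σ_{j=0}^{t_S} C(n,i) 3^i C(n-k, j) ≤ 2^{n-k}. -/

import Mathlib

open Finset

open scoped Classical

noncomputable section

abbrev F2 := ZMod 2
abbrev F4 := GaloisField 2 2

/-- Trace from `F4` to `F2`. -/
def trF : F4 →ₗ[F2] F2 := Algebra.trace F2 F4

/-- Hamming weight of a vector. -/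
def wt {α : Type*} [Zero α] {N : ℕ} (x : Fin N → α) : ℕ := Nat.card {i // x i ≠ 0}

/-- Hermitian trace inner product on `F4^n`. -/
def ipD {n : ℕ} (x y : Fin n → F4) : F2 := trF (∑ i, x i * (y i) ^ 2)

/-- Mixed inner product on `F4^n × F2^m`. -/
def ipDS {n m : ℕ} (x y : (Fin n → F4) × (Fin m → F2)) : F2 :=
  ipD x.1 y.1 + ∑ j, x.2 j * y.2 j

/-- The F2-row space of `H` inside `F4^n`. -/
def rowSpanF2 {n m : ℕ} (H : Fin m → Fin n → F4) : Set (Fin n → F4) :=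
  {v | ∃ u : Fin m → F2, v = fun i => ∑ r, algebraMap F2 F4 (u r) * H r i}

/-- The data-syndrome code generated by the rows of `[H | I_m]`. -/
def CDS {n m : ℕ} (H : Fin m → Fin n → F4) : Set ((Fin n → F4) × (Fin m → F2)) :=
  {w | ∃ u : Fin m → F2, w = (fun i => ∑ r, algebraMap F2 F4 (u r) * H r i, u)}

/-- Dual with respect to the mixed inner product. -/
def dualDS {n m : ℕ} (D : Set ((Fin n → F4) × (Fin m → F2))) :
    Set ((Fin n → F4) × (Fin m → F2)) :=
  {v | ∀ w ∈ D, ipDS w v = 0}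

/-- Split weight enumerator. -/
def Bwt {n m : ℕ} (D : Set ((Fin n → F4) × (Fin m → F2))) (i j : ℕ) : ℕ :=
  Nat.card {w : (Fin n → F4) × (Fin m → F2) // w ∈ D ∧ wt w.1 = i ∧ wt w.2 = j}

/-- q-ary Krawtchouk polynomial `K_t(x; N, q)` evaluated at integer `x`. -/
def kraw (t x N q : ℕ) : ℚ :=
  ∑ s ∈ Finset.range (t + 1),
    (-1 : ℚ) ^ s * ((q : ℚ) - 1) ^ (t - s) * (x.choose s) * ((N - x).choose (t - s))


lemma wt_eq_card {α : Type*} [Zero α] {N : ℕ} (x : Fin N → α) :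
    wt x = (univ.filter fun j => x j ≠ 0).card := by
  rw [wt, Nat.card_eq_fintype_card, Fintype.card_subtype]

lemma card_fiber {α : Type*} [Fintype α] [Zero α] (N : ℕ) (s : Finset (Fin N)) :
    Fintype.card {x : Fin N → α // ∀ j, x j ≠ 0 ↔ j ∈ s}
      = (Fintype.card α - 1) ^ s.card := by
  have e : {x : Fin N → α // ∀ j, x j ≠ 0 ↔ j ∈ s} ≃ ∀ j : Fin N, {a : α // a ≠ 0 ↔ j ∈ s} :=
    Equiv.subtypePiEquivPi (p := fun (j : Fin N) (a : α) => a ≠ 0 ↔ j ∈ s)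
  rw [Fintype.card_congr e, Fintype.card_pi]
  have h1 : ∀ j ∈ s, Fintype.card {a : α // a ≠ 0 ↔ j ∈ s} = Fintype.card α - 1 := by
    intro j hj
    have : ∀ a : α, (a ≠ 0 ↔ j ∈ s) ↔ a ≠ 0 := by simp [hj]
    rw [Fintype.card_congr (Equiv.subtypeEquivRight this), Fintype.card_subtype_compl,
      Fintype.card_subtype_eq]
  have h2 : ∀ j ∉ s, Fintype.card {a : α // a ≠ 0 ↔ j ∈ s} = 1 := by
    intro j hj
    have : ∀ a : α, (a ≠ 0 ↔ j ∈ s) ↔ a = 0 := by simp [hj]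
    rw [Fintype.card_congr (Equiv.subtypeEquivRight this), Fintype.card_subtype_eq]
  calc ∏ j, Fintype.card {a : α // a ≠ 0 ↔ j ∈ s}
      = ∏ j ∈ s, Fintype.card {a : α // a ≠ 0 ↔ j ∈ s} := by
        rw [← Finset.prod_subset (subset_univ s)]
        intro j _ hj; exact h2 j hj
    _ = ∏ j ∈ s, (Fintype.card α - 1) := Finset.prod_congr rfl h1
    _ = (Fintype.card α - 1) ^ s.card := by rw [Finset.prod_const]

lemma card_sphere {α : Type*} [Fintype α] [Zero α] (N i : ℕ) :
    (univ.filter fun x : Fin N → α => wt x = i).card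
      = N.choose i * (Fintype.card α - 1) ^ i := by
  rw [Finset.card_eq_sum_card_fiberwise
      (f := fun x : Fin N → α => univ.filter fun j => x j ≠ 0)
      (t := univ.powersetCard i)]
  · have : ∀ s ∈ univ.powersetCard i,
        ((univ.filter fun x : Fin N → α => wt x = i).filter
          (fun x => (univ.filter fun j => x j ≠ 0) = s)).card
        = (Fintype.card α - 1) ^ i := by
      intro s hs
      rw [Finset.mem_powersetCard_univ] at hs
      have : ((univ.filter fun x : Fin N → α => wt x = i).filter
          (fun x => (univ.filter fun j => x j ≠ 0) = s))
          = univ.filter (fun x : Fin N → α => ∀ j, x j ≠ 0 ↔ j ∈ s) := by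
        ext x
        simp only [Finset.mem_filter, Finset.mem_univ, true_and, wt_eq_card]
        constructor
        · rintro ⟨-, h2⟩ j; rw [← h2]; simp
        · intro h
          have : (univ.filter fun j => x j ≠ 0) = s := by
            ext j; simp [h j]
          exact ⟨by rw [this, hs], this⟩
      rw [this, ← hs, ← card_fiber, Fintype.card_subtype]
    rw [Finset.sum_congr rfl this, Finset.sum_const, Finset.card_powersetCard,
      Finset.card_univ, Fintype.card_fin, smul_eq_mul]
  · intro x hx
    simp only [Finset.mem_coe, Finset.mem_filter, Finset.mem_univ, true_and, wt_eq_card] at hx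
    rw [Finset.mem_coe, Finset.mem_powersetCard_univ]; exact hx

lemma card_ball {α : Type*} [Fintype α] [Zero α] (N t : ℕ) :
    (univ.filter fun x : Fin N → α => wt x ≤ t).card
      = ∑ i ∈ Finset.range (t + 1), N.choose i * (Fintype.card α - 1) ^ i := by
  rw [Finset.card_eq_sum_card_fiberwise (f := wt) (t := Finset.range (t + 1))
      (fun x hx => by simpa [Nat.lt_succ_iff] using (Finset.mem_filter.mp hx).2)]
  refine Finset.sum_congr rfl fun i hi => ?_
  rw [← card_sphere]
  congr 1
  ext x
  simp only [Finset.mem_filter, Finset.mem_univ, true_and, and_iff_right_iff_imp]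
  intro h; rw [h]; exact Nat.lt_succ_iff.mp (Finset.mem_range.mp hi)

/-- hybrid Hamming bound for non-degenerate DS codes correcting
`t_D` data errors and `t_S` syndrome errors. -/
theorem stmt10 (n k tD tS : ℕ) (hk : k ≤ n) (H : Fin (n - k) → Fin n → F4)
    (hinj : Set.InjOn
      (fun ez : (Fin n → F4) × (Fin (n - k) → F2) =>
        (fun r => ipD (H r) ez.1 + ez.2 r : Fin (n - k) → F2))
      {ez | wt ez.1 ≤ tD ∧ wt ez.2 ≤ tS}) :
    ∑ i ∈ Finset.range (tD + 1), ∑ j ∈ Finset.range (tS + 1),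
      n.choose i * 3 ^ i * (n - k).choose j ≤ 2 ^ (n - k) := by
  letI : Fintype F4 := Fintype.ofFinite _
  set m := n - k
  set B : Finset ((Fin n → F4) × (Fin m → F2)) :=
    (univ.filter fun x : Fin n → F4 => wt x ≤ tD) ×ˢ
    (univ.filter fun z : Fin m → F2 => wt z ≤ tS) with hB
  have hBsub : ∀ ez ∈ B, ez ∈ {ez : (Fin n → F4) × (Fin m → F2) | wt ez.1 ≤ tD ∧ wt ez.2 ≤ tS} := by
    intro ez hez
    simp only [hB, Finset.mem_product, Finset.mem_filter, Finset.mem_univ, true_and] at hez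
    exact hez
  have hcard4 : Fintype.card F4 = 4 := by
    rw [← Nat.card_eq_fintype_card, GaloisField.card 2 2 (by norm_num)]; norm_num
  have hcard2 : Fintype.card F2 = 2 := by simp
  have hBcard : B.card = ∑ i ∈ Finset.range (tD + 1), ∑ j ∈ Finset.range (tS + 1),
      n.choose i * 3 ^ i * m.choose j := by
    rw [hB, Finset.card_product, card_ball, card_ball, hcard4, hcard2,
      Finset.sum_mul_sum]
    refine Finset.sum_congr rfl fun i _ => Finset.sum_congr rfl fun j _ => ?_
    norm_num
  rw [← hBcard]
  calc B.card ≤ Fintype.card (Fin m → F2) := by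
        rw [← Finset.card_univ]
        exact Finset.card_le_card_of_injOn _ (fun a _ => Finset.mem_univ _)
          (fun a ha b hb hab => hinj (hBsub a ha) (hBsub b hb) hab)
    _ = 2 ^ m := by simp [hcard2]
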